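/- Let X be a set with a right self-distributive binary operation ▷, and let C_n = ℤX^{n+1} be the free abelian group on (n+1)-tuples of elements of X. For 0 ≤ i ≤ n define ℤ-linear maps d_{i}^{ℓ}, d_{i}^{r} : C_n → C_{n−1} on generators by d_{i}^{ℓ}(x_0, …, x_n) = (x_0 ▷ x_i, …, x_{i−1} ▷ x_i, x_{i+1}, …, x_n) and d_{i}^{r}(x_0, …, x_n) = (x_0, …, x_{i−1}, x_{i+1}, …, x_n), and set d_{i}^{R} = d_{i}^{ℓ} − d_{i}^{r}. Then for all 0 ≤ i < j ≤ n one has d_{i}^{R} ∘ d_{j}^{R} = d_{j−1}^{R} ∘ d_{i}^{R}; that is, (C_n, d_i^{R}) is a presimplicial module. -/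
import Mathlib


/-- The "left" face map `d_i^ℓ` of a right self-distributive structure, sending
`(x_0, …, x_{n+1})` to `(x_0 ▷ x_i, …, x_{i-1} ▷ x_i, x_{i+1}, …, x_{n+1})`
(with a junk value when `i` is out of range, which never occurs in its use below). -/
def distribFace {X : Type*} (op : X → X → X) (n : ℕ) (i : ℕ)
    (x : Fin (n + 2) → X) : Fin (n + 1) → X :=
  fun j => if h : (j : ℕ) < i ∧ i < n + 2 then op (x j.castSucc) (x ⟨i, h.2⟩) else x j.succ

/-- The "right" (trivial) face map `d_i^r`, sending `(x_0, …, x_{n+1})` to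
`(x_0, …, x_{i-1}, x_{i+1}, …, x_{n+1})`, i.e. deleting the `i`-th coordinate. -/
def deleteFace {X : Type*} (n : ℕ) (i : ℕ) (x : Fin (n + 2) → X) : Fin (n + 1) → X :=
  fun j => if (j : ℕ) < i then x j.castSucc else x j.succ

/-- The ℤ-linear extension `d_i^ℓ : ℤX^{n+2} → ℤX^{n+1}`. -/
noncomputable def dl {X : Type*} (op : X → X → X) (n : ℕ) (i : ℕ) :
    ((Fin (n + 2) → X) →₀ ℤ) →ₗ[ℤ] ((Fin (n + 1) → X) →₀ ℤ) :=
  Finsupp.lift ((Fin (n + 1) → X) →₀ ℤ) ℤ (Fin (n + 2) → X) fun x =>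
    Finsupp.single (distribFace op n i x) (1 : ℤ)

/-- The ℤ-linear extension `d_i^r : ℤX^{n+2} → ℤX^{n+1}`. -/
noncomputable def dr {X : Type*} (n : ℕ) (i : ℕ) :
    ((Fin (n + 2) → X) →₀ ℤ) →ₗ[ℤ] ((Fin (n + 1) → X) →₀ ℤ) :=
  Finsupp.lift ((Fin (n + 1) → X) →₀ ℤ) ℤ (Fin (n + 2) → X) fun x =>
    Finsupp.single (deleteFace n i x) (1 : ℤ)

/-- The two-term rack face map `d_i^R = d_i^ℓ - d_i^r`. -/
noncomputable def dR {X : Type*} (op : X → X → X) (n : ℕ) (i : ℕ) :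
    ((Fin (n + 2) → X) →₀ ℤ) →ₗ[ℤ] ((Fin (n + 1) → X) →₀ ℤ) :=
  dl op n i - dr n i

section aux
variable {X : Type*} (op : X → X → X)

lemma aux_ll (hop : ∀ a b c : X, op (op a b) c = op (op a c) (op b c))
    (n i j : ℕ) (hij : i < j) (hj : j ≤ n + 2) (x : Fin (n + 3) → X) :
    distribFace op n i (distribFace op (n + 1) j x)
      = distribFace op n (j - 1) (distribFace op (n + 1) i x) := by
  funext k
  simp only [distribFace, Fin.coe_castSucc, Fin.val_succ, Fin.castSucc_mk, Fin.succ_mk]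
  split_ifs <;> first
      | (exfalso; omega)
      | rfl
      | (exact congrArg x (by ext; simp; omega))
      | (rw [← hop]; congr 1 <;> exact congrArg x (by ext; simp; omega))
      | (congr 1 <;> exact congrArg x (by ext; simp; omega))

lemma aux_lr (n i j : ℕ) (hij : i < j) (hj : j ≤ n + 2) (x : Fin (n + 3) → X) :
    distribFace op n i (deleteFace (n + 1) j x)
      = deleteFace n (j - 1) (distribFace op (n + 1) i x) := by
  funext k
  simp only [distribFace, deleteFace, Fin.coe_castSucc, Fin.val_succ, Fin.castSucc_mk,
    Fin.succ_mk]
  split_ifs <;> first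
      | (exfalso; omega)
      | rfl
      | (exact congrArg x (by ext; simp; omega))
      | (congr 1 <;> exact congrArg x (by ext; simp; omega))

lemma aux_rl (n i j : ℕ) (hij : i < j) (hj : j ≤ n + 2) (x : Fin (n + 3) → X) :
    deleteFace n i (distribFace op (n + 1) j x)
      = distribFace op n (j - 1) (deleteFace (n + 1) i x) := by
  funext k
  simp only [distribFace, deleteFace, Fin.coe_castSucc, Fin.val_succ, Fin.castSucc_mk,
    Fin.succ_mk]
  split_ifs <;> first
      | (exfalso; omega)
      | rfl
      | (exact congrArg x (by ext; simp; omega))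
      | (congr 1 <;> exact congrArg x (by ext; simp; omega))

lemma aux_rr (n i j : ℕ) (hij : i < j) (hj : j ≤ n + 2) (x : Fin (n + 3) → X) :
    deleteFace n i (deleteFace (n + 1) j x)
      = deleteFace n (j - 1) (deleteFace (n + 1) i x) := by
  funext k
  simp only [deleteFace, Fin.coe_castSucc, Fin.val_succ, Fin.castSucc_mk, Fin.succ_mk]
  split_ifs <;> first
      | (exfalso; omega)
      | rfl
      | (exact congrArg x (by ext; simp; omega))

lemma dl_single (n i : ℕ) (x : Fin (n + 2) → X) :
    dl op n i (Finsupp.single x 1) = Finsupp.single (distribFace op n i x) 1 := by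
  simp [dl]

lemma dr_single (n i : ℕ) (x : Fin (n + 2) → X) :
    dr (X := X) n i (Finsupp.single x 1) = Finsupp.single (deleteFace n i x) 1 := by
  simp [dr]

end aux

/-- **Two-term rack face maps form a presimplicial module.**
If `▷` is right self-distributive then `d_i^R ∘ d_j^R = d_{j-1}^R ∘ d_i^R`
for all `0 ≤ i < j ≤ n + 2` (here `dR op (n+1) j : ℤX^{n+3} → ℤX^{n+2}` and
`dR op n i : ℤX^{n+2} → ℤX^{n+1}`). -/
theorem dR_presimplicial {X : Type*} (op : X → X → X)
    (hop : ∀ a b c : X, op (op a b) c = op (op a c) (op b c)) :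
    ∀ (n i j : ℕ), i < j → j ≤ n + 2 →
      (dR op n i).comp (dR op (n + 1) j) = (dR op n (j - 1)).comp (dR op (n + 1) i) := by
  intro n i j hij hj
  apply Finsupp.lhom_ext
  intro x b
  have hb : (Finsupp.single x b : (Fin (n + 3) → X) →₀ ℤ) = b • Finsupp.single x 1 := by
    simp [Finsupp.smul_single]
  rw [hb, map_smul, map_smul]
  congr 1
  simp only [LinearMap.comp_apply, dR, LinearMap.sub_apply, map_sub,
    dl_single, dr_single]
  rw [aux_ll op hop n i j hij hj, aux_lr op n i j hij hj, aux_rl op n i j hij hj,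
    aux_rr n i j hij hj]
  abel
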